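/- Conditional mean formula (case r=1): With X₁,…,Xₙ independent Poisson(λⱼ) and Y = A·X for a nonnegative integer matrix A, E[Xⱼ | Y = b] = λⱼ · F₀(b₁ - a_{1j}, …, b_m - a_{mj}) / F₀(b₁,…,b_m), provided all b_i - a_{ij} ≥ 0 and F₀(b) > 0; if some b_i - a_{ij} < 0 then E[Xⱼ | Y=b] = 0. -/

import Mathlib

open MeasureTheory ProbabilityTheory Real
open scoped BigOperators ENNReal

/-- `F₀(b) = Σ_{k ∈ ℕⁿ, A·k = b} ∏ⱼ λⱼ^{kⱼ}/kⱼ!` (empty sum gives 0). -/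
noncomputable def F0 {m n : ℕ} (A : Fin m → Fin n → ℕ) (lam : Fin n → ℝ)
    (b : Fin m → ℕ) : ℝ :=
  ∑' k : Fin n → ℕ,
    if ∀ i, ∑ j, A i j * k j = b i then ∏ j, lam j ^ k j / (Nat.factorial (k j)) else 0

/-- Conditional mean formula: for independent Poisson `Xⱼ` and `Y = A·X`,
`E[Xⱼ | Y = b] = λⱼ F₀(b - A_{·j}) / F₀(b)` when all `bᵢ - aᵢⱼ ≥ 0` and `F₀(b) > 0`,
and `E[Xⱼ | Y = b] = 0` when some `bᵢ - aᵢⱼ < 0`. -/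
theorem conditional_mean
    {Ω : Type*} [MeasurableSpace Ω] (μ : Measure Ω) [IsProbabilityMeasure μ]
    {m n : ℕ} (A : Fin m → Fin n → ℕ) (lam : Fin n → ℝ) (hlam : ∀ j, 0 < lam j)
    (X : Fin n → Ω → ℕ) (hXm : ∀ j, Measurable (X j))
    (hindep : iIndepFun X μ)
    (hX : ∀ j k, μ (X j ⁻¹' {k}) =
      ENNReal.ofReal (Real.exp (-lam j) * lam j ^ k / Nat.factorial k))
    (b : Fin m → ℕ) (j : Fin n)
    (hpos : 0 < μ {ω | ∀ i, ∑ j', A i j' * X j' ω = b i})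
    (hF0 : 0 < F0 A lam b) :
    ((∀ i, A i j ≤ b i) →
      ∫ ω, ((X j ω : ℝ)) ∂(μ[|{ω | ∀ i, ∑ j', A i j' * X j' ω = b i}]) =
        lam j * F0 A lam (fun i => b i - A i j) / F0 A lam b) ∧
    ((∃ i, b i < A i j) →
      ∫ ω, ((X j ω : ℝ)) ∂(μ[|{ω | ∀ i, ∑ j', A i j' * X j' ω = b i}]) = 0) := by
  classical
  -- the map collecting all the coordinates
  set T : Ω → (Fin n → ℕ) := fun ω l => X l ω with hT
  have hTm : Measurable T := measurable_pi_lambda _ fun l => hXm l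
  set ν : Measure (Fin n → ℕ) := μ.map T with hν
  haveI : IsProbabilityMeasure ν := by
    rw [hν]; exact Measure.isProbabilityMeasure_map hTm.aemeasurable
  have hmeas : ∀ s : Set (Fin n → ℕ), MeasurableSet s := fun s => s.to_countable.measurableSet
  -- single-point masses
  have hνs : ∀ k : Fin n → ℕ,
      ν {k} = ∏ l, ENNReal.ofReal (Real.exp (-lam l) * lam l ^ k l /
        Nat.factorial (k l)) := by
    intro k
    have hpre : T ⁻¹' {k} = ⋂ l, X l ⁻¹' {k l} := by
      ext ω
      simp only [Set.mem_preimage, Set.mem_singleton_iff, Set.mem_iInter, funext_iff, hT]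
    rw [hν, Measure.map_apply hTm (hmeas _), hpre]
    have h := hindep.measure_inter_preimage_eq_mul Finset.univ
      (sets := fun l => ({k l} : Set ℕ)) (fun l _ => measurableSet_singleton _)
    simp only [Finset.mem_univ, Set.iInter_true] at h
    calc μ (⋂ l, X l ⁻¹' {k l}) = ∏ l, μ (X l ⁻¹' {k l}) := by simpa using h
    _ = _ := by simp [hX]
  set C : ℝ := ∏ l, Real.exp (-lam l) with hCdef
  have hC : 0 < C := Finset.prod_pos fun l _ => Real.exp_pos _
  have hprodnn : ∀ k : Fin n → ℕ, 0 ≤ ∏ l, lam l ^ k l / (Nat.factorial (k l) : ℝ) := by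
    intro k
    refine Finset.prod_nonneg fun l _ => ?_
    have := (hlam l).le
    positivity
  have hνs2 : ∀ k : Fin n → ℕ,
      ν {k} = ENNReal.ofReal C *
        ENNReal.ofReal (∏ l, lam l ^ k l / (Nat.factorial (k l) : ℝ)) := by
    intro k
    rw [hνs k, ← ENNReal.ofReal_mul hC.le, hCdef, ← Finset.prod_mul_distrib,
      ← ENNReal.ofReal_prod_of_nonneg]
    · congr 1
      refine Finset.prod_congr rfl fun l _ => ?_
      ring
    · intro l _
      have := (hlam l).le
      positivity
  -- measure of a set as a tsum
  have hcount : ∀ s : Set (Fin n → ℕ), ν s = ∑' k, if k ∈ s then ν {k} else 0 := by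
    intro s
    rw [← lintegral_indicator_one (hmeas s), lintegral_countable']
    refine tsum_congr fun k => ?_
    by_cases hk : k ∈ s <;> simp [Set.indicator_apply, hk]
  -- the normalizing sums
  set G : (Fin m → ℕ) → ℝ≥0∞ := fun b' => ∑' k : Fin n → ℕ,
      if ∀ i, ∑ l, A i l * k l = b' i then
        ENNReal.ofReal (∏ l, lam l ^ k l / (Nat.factorial (k l) : ℝ)) else 0 with hGdef
  have hνS : ∀ b' : Fin m → ℕ,
      ν {k | ∀ i, ∑ l, A i l * k l = b' i} = ENNReal.ofReal C * G b' := by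
    intro b'
    rw [hcount]
    simp only [hGdef]
    rw [← ENNReal.tsum_mul_left]
    refine tsum_congr fun k => ?_
    by_cases hk : ∀ i, ∑ l, A i l * k l = b' i <;>
      simp [Set.mem_setOf_eq, hk, hνs2 k]
  have hCne0 : ENNReal.ofReal C ≠ 0 := by
    simp [ENNReal.ofReal_eq_zero, not_le, hC]
  have hGfin : ∀ b' : Fin m → ℕ, G b' ≠ ∞ := by
    intro b' hG
    have h1 : ENNReal.ofReal C * G b' ≠ ∞ := by
      rw [← hνS]; exact measure_ne_top ν _
    exact h1 (ENNReal.mul_eq_top.mpr (Or.inl ⟨hCne0, hG⟩))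
  have hGtoReal : ∀ b' : Fin m → ℕ, (G b').toReal = F0 A lam b' := by
    intro b'
    simp only [hGdef]
    have hterm : ∀ k : Fin n → ℕ,
        (if ∀ i, ∑ l, A i l * k l = b' i then
          ENNReal.ofReal (∏ l, lam l ^ k l / (Nat.factorial (k l) : ℝ)) else 0) ≠ ∞ := by
      intro k; split <;> simp
    rw [ENNReal.tsum_toReal_eq hterm]
    unfold F0
    refine tsum_congr fun k => ?_
    split_ifs with h
    · exact ENNReal.toReal_ofReal (hprodnn k)
    · simp
  have hGval : ∀ b' : Fin m → ℕ, G b' = ENNReal.ofReal (F0 A lam b') := by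
    intro b'
    rw [← hGtoReal, ENNReal.ofReal_toReal (hGfin b')]
  -- identify the conditioning event
  set E : Set Ω := {ω | ∀ i, ∑ j', A i j' * X j' ω = b i} with hEdef
  set S : Set (Fin n → ℕ) := {k | ∀ i, ∑ l, A i l * k l = b i} with hSdef
  have hES : E = T ⁻¹' S := rfl
  have hμE : μ E = ν S := by
    rw [hES, hν, Measure.map_apply hTm (hmeas S)]
  -- the numerator lintegral
  set N : ℝ≥0∞ := ∫⁻ k, ((k j : ℕ) : ℝ≥0∞) ∂(ν.restrict S) with hNdef
  have hN : N = ∑' k : Fin n → ℕ, if k ∈ S then ((k j : ℕ) : ℝ≥0∞) * ν {k} else 0 := by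
    rw [hNdef, lintegral_countable']
    refine tsum_congr fun k => ?_
    rw [Measure.restrict_apply (measurableSet_singleton k)]
    by_cases hk : k ∈ S
    · have h2 : ({k} : Set (Fin n → ℕ)) ∩ S = {k} :=
        Set.inter_eq_self_of_subset_left (by simpa using hk)
      simp [h2, hk]
    · have h2 : ({k} : Set (Fin n → ℕ)) ∩ S = ∅ := by
        ext x
        simp only [Set.mem_inter_iff, Set.mem_singleton_iff, Set.mem_empty_iff_false,
          iff_false, not_and]
        rintro rfl; exact hk
      simp [h2, hk]
  -- the integral against the conditional measure
  have hint : ∫ ω, ((X j ω : ℝ)) ∂(μ[|E]) = ((ν S)⁻¹).toReal * N.toReal := by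
    have hcond : μ[|E] = (μ E)⁻¹ • μ.restrict E := rfl
    rw [hcond, integral_smul_measure]
    have hmf : Measurable fun ω => ((X j ω : ℕ) : ℝ) :=
      measurable_from_top.comp (hXm j)
    rw [integral_eq_lintegral_of_nonneg_ae (ae_of_all _ fun ω => Nat.cast_nonneg _)
      hmf.aestronglyMeasurable]
    have hg : Measurable fun k : Fin n → ℕ => ((k j : ℕ) : ℝ≥0∞) :=
      measurable_from_top.comp (measurable_pi_apply j)
    have h1 : ∫⁻ ω, ENNReal.ofReal ((X j ω : ℕ) : ℝ) ∂(μ.restrict E) = N := by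
      calc ∫⁻ ω, ENNReal.ofReal ((X j ω : ℕ) : ℝ) ∂(μ.restrict E)
          = ∫⁻ ω, ((X j ω : ℕ) : ℝ≥0∞) ∂(μ.restrict E) :=
            lintegral_congr fun ω => ENNReal.ofReal_natCast _
        _ = ∫⁻ ω, ((T ω j : ℕ) : ℝ≥0∞) ∂(μ.restrict E) := by rw [hT]
        _ = ∫⁻ k, ((k j : ℕ) : ℝ≥0∞) ∂((μ.restrict E).map T) :=
            (lintegral_map hg hTm).symm
        _ = N := by
            rw [hNdef, hν, Measure.restrict_map hTm (hmeas S), hES]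
    rw [h1, hμE, smul_eq_mul]
  have hμEne0 : ν S ≠ 0 := by
    have h2 : μ E ≠ 0 := hpos.ne'
    rwa [hμE] at h2
  constructor
  · -- positive case
    intro hall
    set b' : Fin m → ℕ := fun i => b i - A i j with hb'def
    -- the shift map
    set φ : (Fin n → ℕ) → (Fin n → ℕ) := fun k l => k l + if l = j then 1 else 0 with hφdef
    have hφinj : Function.Injective φ := by
      intro x y h
      funext l
      have h2 := congrFun h l
      simp only [hφdef] at h2
      exact add_right_cancel h2
    have hφrange : ∀ x : Fin n → ℕ, x j ≠ 0 → x ∈ Set.range φ := by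
      intro x hx
      refine ⟨fun l => x l - if l = j then 1 else 0, funext fun l => ?_⟩
      simp only [hφdef]
      split_ifs with hl
      · subst hl; omega
      · omega
    have hsum : ∀ (i : Fin m) (k : Fin n → ℕ),
        ∑ l, A i l * φ k l = (∑ l, A i l * k l) + A i j := by
      intro i k
      simp only [hφdef, Nat.mul_add, Finset.sum_add_distrib]
      congr 1
      rw [Finset.sum_congr rfl (fun l _ => by rw [mul_ite, mul_one, mul_zero])]
      simp [Finset.sum_ite_eq']
    have hφmem : ∀ k : Fin n → ℕ, (φ k ∈ S) ↔ (∀ i, ∑ l, A i l * k l = b' i) := by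
      intro k
      simp only [hSdef, Set.mem_setOf_eq, hsum, hb'def]
      constructor
      · intro h i; have h2 := h i; have h3 := hall i; omega
      · intro h i; have h2 := h i; have h3 := hall i; omega
    -- key one-point identity
    have hkey : ∀ k : Fin n → ℕ,
        ((φ k j : ℕ) : ℝ≥0∞) * ν {φ k} = ENNReal.ofReal (lam j) * ν {k} := by
      intro k
      rw [hνs (φ k), hνs k]
      have hj : φ k j = k j + 1 := by simp [hφdef]
      rw [← Finset.mul_prod_erase Finset.univ _ (Finset.mem_univ j),
        ← Finset.mul_prod_erase Finset.univ
          (fun l => ENNReal.ofReal (Real.exp (-lam l) * lam l ^ k l /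
            Nat.factorial (k l))) (Finset.mem_univ j)]
      have herase : ∏ l ∈ Finset.univ.erase j,
          ENNReal.ofReal (Real.exp (-lam l) * lam l ^ φ k l / Nat.factorial (φ k l)) =
          ∏ l ∈ Finset.univ.erase j,
          ENNReal.ofReal (Real.exp (-lam l) * lam l ^ k l / Nat.factorial (k l)) := by
        refine Finset.prod_congr rfl fun l hl => ?_
        have h2 : φ k l = k l := by
          simp [hφdef, Finset.ne_of_mem_erase hl]
        rw [h2]
      rw [herase, ← mul_assoc, ← mul_assoc]
      congr 1
      rw [hj]
      have hfac : ((k j + 1 : ℕ) : ℝ) *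
          (Real.exp (-lam j) * lam j ^ (k j + 1) / Nat.factorial (k j + 1)) =
          lam j * (Real.exp (-lam j) * lam j ^ k j / Nat.factorial (k j)) := by
        rw [Nat.factorial_succ, pow_succ]
        have h1 : (Nat.factorial (k j) : ℝ) ≠ 0 :=
          Nat.cast_ne_zero.mpr (Nat.factorial_ne_zero _)
        have h2 : ((k j : ℝ) + 1) ≠ 0 := by positivity
        push_cast
        field_simp
      calc ((k j + 1 : ℕ) : ℝ≥0∞) *
            ENNReal.ofReal (Real.exp (-lam j) * lam j ^ (k j + 1) / Nat.factorial (k j + 1))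
          = ENNReal.ofReal (((k j + 1 : ℕ) : ℝ) *
            (Real.exp (-lam j) * lam j ^ (k j + 1) / Nat.factorial (k j + 1))) := by
            rw [ENNReal.ofReal_mul (by positivity), ENNReal.ofReal_natCast]
        _ = ENNReal.ofReal (lam j *
            (Real.exp (-lam j) * lam j ^ k j / Nat.factorial (k j))) := by rw [hfac]
        _ = _ := by rw [ENNReal.ofReal_mul (hlam j).le]
    -- reindex the numerator sum
    have hNval : N = ENNReal.ofReal (lam j) * ν {k | ∀ i, ∑ l, A i l * k l = b' i} := by
      rw [hN]
      have hsupp : (Function.support fun x : Fin n → ℕ =>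
          if x ∈ S then ((x j : ℕ) : ℝ≥0∞) * ν {x} else 0) ⊆ Set.range φ := by
        intro x hx
        refine hφrange x fun hx0 => ?_
        apply hx
        by_cases hxS : x ∈ S <;> simp [hxS, hx0]
      rw [← hφinj.tsum_eq hsupp]
      rw [hcount {k | ∀ i, ∑ l, A i l * k l = b' i}, ← ENNReal.tsum_mul_left]
      refine tsum_congr fun k => ?_
      by_cases hk : ∀ i, ∑ l, A i l * k l = b' i
      · have hmem : φ k ∈ S := (hφmem k).mpr hk
        rw [if_pos hmem, if_pos (show k ∈ {k | ∀ i, ∑ l, A i l * k l = b' i} from hk)]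
        exact hkey k
      · have hmem : φ k ∉ S := fun h => hk ((hφmem k).mp h)
        rw [if_neg hmem, if_neg (show k ∉ {k | ∀ i, ∑ l, A i l * k l = b' i} from hk)]
        simp
    -- put everything together
    rw [hint, hNval, hνS b', hGval b', hSdef, hνS b, hGval b]
    have hF0b' : 0 ≤ F0 A lam b' := by
      rw [← hGtoReal b']; exact ENNReal.toReal_nonneg
    rw [ENNReal.toReal_inv, ENNReal.toReal_mul, ENNReal.toReal_mul, ENNReal.toReal_mul,
      ENNReal.toReal_ofReal hC.le, ENNReal.toReal_ofReal hF0.le,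
      ENNReal.toReal_ofReal (hlam j).le, ENNReal.toReal_ofReal hF0b']
    have hCne : C ≠ 0 := hC.ne'
    have hFne : F0 A lam b ≠ 0 := hF0.ne'
    field_simp
  · -- negative case
    rintro ⟨i0, hi0⟩
    have hNzero : N = 0 := by
      rw [hN, ENNReal.tsum_eq_zero]
      intro k
      by_cases hk : k ∈ S
      · have hk' : ∀ i, ∑ l, A i l * k l = b i := by
          simpa only [hSdef, Set.mem_setOf_eq] using hk
        have hkj : k j = 0 := by
          have hle : A i0 j * k j ≤ ∑ l, A i0 l * k l :=
            Finset.single_le_sum (f := fun l => A i0 l * k l) (fun l _ => Nat.zero_le _)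
              (Finset.mem_univ j)
          have heq : ∑ l, A i0 l * k l = b i0 := hk' i0
          by_contra h
          have h1 : 1 ≤ k j := Nat.one_le_iff_ne_zero.mpr h
          have h2 : A i0 j ≤ A i0 j * k j := Nat.le_mul_of_pos_right _ h1
          omega
        simp [hk, hkj]
      · simp [hk]
    rw [hint, hNzero]
    simp
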